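/- Let μ be a finite signed measure on ℤ^d and f : ℤ^d → ℝ, and let m, k, J, N > 0 and ϱ ∈ ℤ^d be such that: (a) |f(x) − f(y)| < m for every x, y ∈ ℤ^d with ‖x − y‖₁ = 1; (b) |f(x) + f(w) − f(y) − f(z)| < k for every x, y, z, w ∈ ℤ^d and i, j ∈ {1,…,d} such that x − y = z − w = e_i and x − z = y − w = e_j; (c) Σ_x μ(x) = 0; (d) ‖Σ_x x·μ(x)‖₁ ≤ N; (e) Σ_x ‖x − ϱ‖₁² · |μ(x)| < J. Then |Σ_x f(x) μ(x)| ≤ mN + kJ. -/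

import Mathlib

open MeasureTheory Filter

namespace RWRE

/-- Lattice points of `ℤ^d`. -/
abbrev Zd (d : ℕ) := Fin d → ℤ

/-- Environments: each site carries a function on steps. -/
abbrev Env (d : ℕ) := Zd d → Zd d → ℝ

variable {d : ℕ}

/-- ℓ¹ norm on `ℤ^d`. -/
def norm1 (x : Zd d) : ℤ := ∑ i, |x i|

/-- ℓ¹ norm of a real vector. -/
noncomputable def norm1R (x : Fin d → ℝ) : ℝ := ∑ i, |x i|

/-- Euclidean norm of an integer vector. -/
noncomputable def norm2 (x : Zd d) : ℝ := Real.sqrt (∑ i, ((x i : ℝ)) ^ 2)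

/-- sup-norm of an integer vector. -/
def normInf (x : Zd d) : ℕ := Finset.univ.sup fun i => (x i).natAbs

/-- sup-norm of a real vector. -/
noncomputable def normInfR (x : Fin d → ℝ) : ℝ := ⨆ i, |x i|

/-- dot product of an integer vector with a real direction. -/
noncomputable def rdot (x : Zd d) (l : Fin d → ℝ) : ℝ := ∑ i, (x i : ℝ) * l i

/-- A probability vector supported on the `2d` unit vectors of `ℤ^d`. -/
def ProbVec (p : Zd d → ℝ) : Prop :=
  (∀ e, 0 ≤ p e) ∧ (∀ e, norm1 e ≠ 1 → p e = 0) ∧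
    (∑ i : Fin d, (p (Pi.single i 1) + p (-Pi.single i 1))) = 1

/-- A valid environment assigns a probability vector on unit steps to each site. -/
def ValidEnv (ω : Env d) : Prop := ∀ x, ProbVec (ω x)

/-- Uniform ellipticity of the environment measure. -/
def UniformlyElliptic (Pr : Measure (Env d)) : Prop :=
  ∃ κ : ℝ, 0 < κ ∧ Pr {ω | ∀ e : Zd d, norm1 e = 1 → κ ≤ ω 0 e} = 1

/-- The coordinates of the environment are i.i.d. under `Pr`. -/
def IIDEnv (Pr : Measure (Env d)) : Prop :=
  (∀ x y : Zd d, Pr.map (fun ω => ω x) = Pr.map (fun ω => ω y)) ∧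
    ProbabilityTheory.iIndepFun (fun x ω => ω x) Pr

/-- `P x ω` is the quenched law of the RWRE started at `x` in environment `ω`:
a probability measure on paths whose cylinder probabilities are given by the
products of the transition probabilities of the environment. -/
def IsQuenchedLaw (P : Zd d → Env d → Measure (ℕ → Zd d)) : Prop :=
  (∀ x, Measurable (P x)) ∧
    ∀ x ω, IsProbabilityMeasure (P x ω) ∧
      ∀ (n : ℕ) (p : ℕ → Zd d),
        P x ω {f | ∀ i ≤ n, f i = p i} =
          (if p 0 = x then 1 else 0) *
            ∏ i ∈ Finset.range n, ENNReal.ofReal (ω (p i) (p (i + 1) - p i))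

/-- The annealed (averaged) law `P_x`. -/
noncomputable def annealed (Pr : Measure (Env d)) (P : Zd d → Env d → Measure (ℕ → Zd d))
    (x : Zd d) : Measure (ℕ → Zd d) :=
  Pr.bind (P x)

/-- Hitting time of a set `B ⊆ ℤ^d` (with value `⊤` if `B` is never hit). -/
noncomputable def hitTime (B : Set (Zd d)) (f : ℕ → Zd d) : ℕ∞ :=
  sInf ((fun n : ℕ => (n : ℕ∞)) '' {n | f n ∈ B})

/-- `T_u^l`: first time the walk's dot product with `l` exceeds `u`. -/
noncomputable def dirHit (l : Fin d → ℝ) (u : ℝ) (f : ℕ → Zd d) : ℕ∞ :=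
  sInf ((fun n : ℕ => (n : ℕ∞)) '' {n | u < rdot (f n) l})

/-- Outer boundary of a subset of `ℤ^d`. -/
def bdry (B : Set (Zd d)) : Set (Zd d) := {x | x ∉ B ∧ ∃ y ∈ B, norm1 (x - y) = 1}

/-- The exit position `X_{T_{∂B}}` of a path from the set `B`. -/
noncomputable def exitPos (B : Set (Zd d)) (f : ℕ → Zd d) : Zd d :=
  f (hitTime (bdry B) f).toNat

/-- Sznitman's condition `(T)_γ` in direction `l`. -/
noncomputable def CondT (P0 : Measure (ℕ → Zd d)) (γ : ℝ) (l : Fin d → ℝ) : Prop :=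
  ∃ ε : ℝ, 0 < ε ∧
    ∀ l' : Fin d → ℝ, (∑ i, (l' i) ^ 2) = 1 → (∑ i, (l' i - l i) ^ 2) < ε →
      ∀ b : ℝ, 0 < b →
        limsup (fun L : ℝ =>
            L ^ (-γ) *
              Real.log ((P0 {f | dirHit (-l') (b * L) f < dirHit l' L f}).toReal))
          atTop < 0

/-- `v` is the asymptotic direction of the walk under `P0`. -/
def IsAsympDir (P0 : Measure (ℕ → Zd d)) (v : Fin d → ℝ) : Prop :=
  P0 {f | Tendsto (fun n => fun i => (f n i : ℝ) / norm2 (f n)) atTop (nhds v)} = 1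

/-- The scales `R_k(N) = ⌈exp((log log N)^{k+1})⌉`. -/
noncomputable def Rnat (k : ℕ) (N : ℝ) : ℕ := ⌈Real.exp ((Real.log (Real.log N)) ^ (k + 1))⌉₊

/-- The scales `R_k(N)` as real numbers. -/
noncomputable def R (k : ℕ) (N : ℝ) : ℝ := (Rnat k N : ℝ)

/-- `n` is a regeneration time of the path `f` in the direction of coordinate `j`. -/
def IsRegenTime (j : Fin d) (f : ℕ → Zd d) (n : ℕ) : Prop :=
  0 < n ∧ (∀ k < n, f k j < f n j) ∧ ∀ k, n ≤ k → f n j ≤ f k j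

/-- `tau j f n` is the `n`-th regeneration time of `f` (and `tau j f 0 = 0`). -/
noncomputable def tau (j : Fin d) (f : ℕ → Zd d) : ℕ → ℕ
  | 0 => 0
  | n + 1 => Nat.nth (IsRegenTime j f) n

/-- The radius `X^{*(n)}` of the `n`-th regeneration. -/
noncomputable def regenRadius (j : Fin d) (f : ℕ → Zd d) (n : ℕ) : ℕ :=
  (Finset.Icc (tau j f (n - 1)) (tau j f n)).sup fun k =>
    (norm1 (f k - f (tau j f (n - 1)))).toNat

/-- The event `A_N = {X^{*(n)} < R₂(N) for all 1 ≤ n ≤ 2N²}`. -/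
noncomputable def eventA (j : Fin d) (N : ℕ) : Set (ℕ → Zd d) :=
  {f | ∀ n : ℕ, 1 ≤ n → n ≤ 2 * N ^ 2 → (regenRadius j f n : ℝ) < R 2 N}

/-- The projection `π̃^j_{v⊥} y = y − (y·e_j/(v·e_j)) v`. -/
noncomputable def perpProj (j : Fin d) (v : Fin d → ℝ) (y : Zd d) : Fin d → ℝ :=
  fun i => (y i : ℝ) - ((y j : ℝ) / v j) * v i

/-- The block `𝒫(x,N)`. -/
noncomputable def blockP (j : Fin d) (v : Fin d → ℝ) (x : Zd d) (N : ℝ) : Set (Zd d) :=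
  {y | -(N ^ 2) < ((y - x) j : ℝ) ∧ ((y - x) j : ℝ) < N ^ 2 ∧
    normInfR (perpProj j v (y - x)) < R 6 N * N}

/-- The middle third `𝒫̃(x,N)`. -/
noncomputable def blockPmid (j : Fin d) (v : Fin d → ℝ) (x : Zd d) (N : ℝ) : Set (Zd d) :=
  {y | -(N ^ 2) / 3 < ((y - x) j : ℝ) ∧ ((y - x) j : ℝ) < N ^ 2 / 3 ∧
    normInfR (perpProj j v (y - x)) < R 6 N * N / 3}

/-- The right boundary part `∂₊𝒫(x,N)`. -/
noncomputable def blockPplus (j : Fin d) (v : Fin d → ℝ) (x : Zd d) (N : ℝ) : Set (Zd d) :=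
  {y | y ∈ bdry (blockP j v x N) ∧ ((y - x) j : ℝ) = N ^ 2}

/-- The event that the walk leaves `𝒫(x,N)` through its right boundary part,
i.e. `T_{∂𝒫(x,N)} = T_{∂₊𝒫(x,N)}`. -/
noncomputable def rightExit (j : Fin d) (v : Fin d → ℝ) (x : Zd d) (N : ℝ) :
    Set (ℕ → Zd d) :=
  {f | hitTime (bdry (blockP j v x N)) f = hitTime (blockPplus j v x N) f}

/-- Conditional law `μ(· | A)`. -/
noncomputable def condLaw {α : Type*} [MeasurableSpace α] (μ : Measure α) (A : Set α) :
    Measure α :=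
  (μ A)⁻¹ • μ.restrict A

/-- The quenched conditional exit law `μ^N_{z,x,ω}`. -/
noncomputable def muQue (P : Zd d → Env d → Measure (ℕ → Zd d)) (j : Fin d)
    (v : Fin d → ℝ) (ω : Env d) (z x : Zd d) (N : ℝ) : Measure (Zd d) :=
  (condLaw (P z ω) (rightExit j v x N)).map (exitPos (blockP j v x N))

/-- The annealed conditional exit law `μ^N_{z,x}`. -/
noncomputable def muAnn (Pr : Measure (Env d)) (P : Zd d → Env d → Measure (ℕ → Zd d))
    (j : Fin d) (v : Fin d → ℝ) (z x : Zd d) (N : ℝ) : Measure (Zd d) :=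
  (condLaw (annealed Pr P z) (rightExit j v x N)).map (exitPos (blockP j v x N))

/-- Coordinatewise expectation of a measure on `ℤ^d`. -/
noncomputable def vecExp (ν : Measure (Zd d)) : Fin d → ℝ := fun i => ∫ x, (x i : ℝ) ∂ν

/-- Variance `Var_μ = E_μ ‖Z − E_μ Z‖₁²`. -/
noncomputable def var1 (ν : Measure (Zd d)) : ℝ :=
  ∫ x, (norm1R fun i => (x i : ℝ) - vecExp ν i) ^ 2 ∂ν

/-- A `(d−1)`-dimensional hypercube of side length `s` in the hyperplane `{y·e_j = c}`. -/
def hypercube (j : Fin d) (c : ℤ) (a : Zd d) (s : ℕ) : Set (Zd d) :=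
  {y | y j = c ∧ ∀ i, i ≠ j → a i ≤ y i ∧ y i < a i + s}

/-- Rapidly decreasing sequences `𝒮(ℕ)`. -/
def RapidDecay (a : ℕ → ℝ) : Prop := ∀ k : ℕ, ∃ C : ℝ, ∀ N : ℕ, |(N : ℝ) ^ k * a N| ≤ C

/-- The scales `L_k`: `L₁ = ⌊L^ψ⌋`, `L_{k+1} = L_k ⌊L^χ⌋`. -/
noncomputable def scaleL (ψ χ : ℝ) (L : ℕ) (k : ℕ) : ℕ :=
  ⌊(L : ℝ) ^ ψ⌋₊ * ⌊(L : ℝ) ^ χ⌋₊ ^ (k - 1)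

/-- `ι`: the smallest `k ≥ 1` with `L_k² > L^{1+δ}`. -/
noncomputable def iota (ψ χ δ : ℝ) (L : ℕ) : ℕ :=
  sInf {k : ℕ | 1 ≤ k ∧ (L : ℝ) ^ (1 + δ) < ((scaleL ψ χ L k : ℕ) : ℝ) ^ 2}

/-- The sublattice `ℒ_N = N²ℤ × ⌊R₆(N)N/4⌋ℤ^{d−1}`. -/
noncomputable def latticeL (j : Fin d) (N : ℕ) : Set (Zd d) :=
  {x | ((N ^ 2 : ℕ) : ℤ) ∣ x j ∧ ∀ i, i ≠ j → ((Rnat 6 (N : ℝ) * N / 4 : ℕ) : ℤ) ∣ x i}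

/-- The tube `C_L`. -/
noncomputable def bigC (j : Fin d) (v : Fin d → ℝ) (δ : ℝ) (L : ℕ) : Set (Zd d) :=
  {x | 0 ≤ x j ∧ ((x j : ℝ)) ≤ (L : ℝ) ^ (1 + δ) ∧
    normInfR (perpProj j v x) ≤ (L : ℝ) ^ (3 * δ) + (x j : ℝ) * (L : ℝ) ^ (-(2 * δ))}

/-- The right boundary part `∂₊C_L`. -/
noncomputable def bigCplus (j : Fin d) (v : Fin d → ℝ) (δ : ℝ) (L : ℕ) : Set (Zd d) :=
  {x | x ∈ bdry (bigC j v δ L) ∧ (L : ℝ) ^ (1 + δ) < (x j : ℝ)}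

/-- The block `𝒫(x,N)` is good with respect to `ω`. -/
noncomputable def GoodBlock (Pr : Measure (Env d)) (P : Zd d → Env d → Measure (ℕ → Zd d))
    (j : Fin d) (v : Fin d → ℝ) (γ ϑ : ℝ) (ω : Env d) (x : Zd d) (N : ℝ) : Prop :=
  ∀ z ∈ blockPmid j v x N,
    P z ω (rightExit j v x N)ᶜ ≤ ENNReal.ofReal (Real.exp (-(R 1 N ^ γ))) ∧
    norm1R (fun i => vecExp (muQue P j v ω z x N) i - vecExp (muAnn Pr P j v z x N) i) ≤
      R 4 N ∧
    ∀ (c : ℤ) (a : Zd d),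
      hypercube j c a ⌈N ^ ϑ⌉₊ ⊆ blockPplus j v x N →
        |(muQue P j v ω z x N (hypercube j c a ⌈N ^ ϑ⌉₊)).toReal -
            (muAnn Pr P j v z x N (hypercube j c a ⌈N ^ ϑ⌉₊)).toReal| <
          N ^ ((ϑ - 1) * ((d : ℝ) - 1) - ϑ * ((d : ℝ) - 1) / ((d : ℝ) + 1))

/-- `(λ,K)`-closeness of `μ₂` to `μ₁` (Definition 3.7): a coupling `(Z₁, Z₂, Z₀)`. -/
noncomputable def Close (lam K : ℝ) (μ₁ μ₂ : Measure (Zd d)) : Prop :=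
  ∃ μ : Measure (Zd d × Zd d × Zd d), IsProbabilityMeasure μ ∧
    μ.map (fun p => p.1) = μ₁ ∧ μ.map (fun p => p.2.1) = μ₂ ∧
    (μ {p | p.1 ≠ p.2.2}).toReal ≤ lam ∧
    μ {p | (norm1 (p.2.2 - p.2.1) : ℝ) ≤ K} = 1 ∧
    (∀ i : Fin d, (∫ p, ((p.1 : Zd d) i : ℝ) ∂μ) = ∫ p, ((p.2.2 : Zd d) i : ℝ) ∂μ) ∧
    (∑' x : Zd d,
        (norm1R fun i => (x i : ℝ) - ∫ p, ((p.1 : Zd d) i : ℝ) ∂μ) ^ 2 *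
          |(μ {p | p.1 = x}).toReal - (μ {p | p.2.2 = x}).toReal|) ≤
      lam * ∫ p, (norm1R fun i => ((p.1 : Zd d) i : ℝ) - ∫ q, ((q.1 : Zd d) i : ℝ) ∂μ) ^ 2 ∂μ

/-- The box of the effective criterion, specified by a rotation matrix `Rm`
(mapping `e_j` to the columns of `Rm`). -/
noncomputable def ecBox (j : Fin d) (Rm : Matrix (Fin d) (Fin d) ℝ) (L : ℝ) : Set (Zd d) :=
  {x | (-(L - 2) < rdot x fun i => Rm i j) ∧ (rdot x fun i => Rm i j) < L + 2 ∧
    ∀ m : Fin d, m ≠ j → |rdot x fun i => Rm i m| < L ^ 2}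

/-- The right boundary part `∂₊B` of the effective-criterion box. -/
noncomputable def ecBplus (j : Fin d) (Rm : Matrix (Fin d) (Fin d) ℝ) (L : ℝ) : Set (Zd d) :=
  {x | x ∈ bdry (ecBox j Rm L) ∧ L + 2 ≤ (rdot x fun i => Rm i j) ∧
    ∀ m : Fin d, m ≠ j → |rdot x fun i => Rm i m| < L ^ 2}

/-- `P_{0,ω}(X_{T_{∂B}} ∈ ∂₊B)` for the effective-criterion box. -/
noncomputable def ecExitProb (P : Zd d → Env d → Measure (ℕ → Zd d)) (j : Fin d)
    (Rm : Matrix (Fin d) (Fin d) ℝ) (ω : Env d) (L : ℝ) : ℝ :=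
  (P 0 ω {f | hitTime (bdry (ecBox j Rm L)) f = hitTime (ecBplus j Rm L) f}).toReal

/-- `ρ = P_{0,ω}(X_{T_{∂B}} ∉ ∂₊B)/P_{0,ω}(X_{T_{∂B}} ∈ ∂₊B)`. -/
noncomputable def ecRho (P : Zd d → Env d → Measure (ℕ → Zd d)) (j : Fin d)
    (Rm : Matrix (Fin d) (Fin d) ℝ) (ω : Env d) (L : ℝ) : ℝ :=
  (P 0 ω {f | hitTime (bdry (ecBox j Rm L)) f = hitTime (ecBplus j Rm L) f}ᶜ).toReal /
    ecExitProb P j Rm ω L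

end RWRE

namespace RWRE

lemma norm1_nonneg (x : Zd d) : 0 ≤ norm1 x :=
  Finset.sum_nonneg fun _ _ => abs_nonneg _

lemma norm1_eq_zero {x : Zd d} (h : norm1 x = 0) : x = 0 := by
  funext j
  have := (Finset.sum_eq_zero_iff_of_nonneg (fun i _ => abs_nonneg (x i))).mp h j (Finset.mem_univ j)
  simpa [abs_eq_zero] using this

lemma norm1_single (i : Fin d) : norm1 (Pi.single i (1:ℤ)) = 1 := by
  simp [norm1, Pi.single_apply, apply_ite abs, Finset.sum_ite_eq']

lemma norm1_add_single {v : Zd d} {i : Fin d} (h : v i < 0) :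
    norm1 v = norm1 (v + (Pi.single i 1 : Zd d)) + 1 := by
  have key : ∀ j, |v j| = |((v + Pi.single i 1 : Zd d)) j| + (if j = i then (1:ℤ) else 0) := by
    intro j
    by_cases hj : j = i
    · subst hj
      simp only [Pi.add_apply, Pi.single_apply, if_pos rfl, Int.abs_eq_natAbs]
      omega
    · simp [Pi.single_apply, hj]
  unfold norm1
  rw [Finset.sum_congr rfl fun j _ => key j, Finset.sum_add_distrib, Finset.sum_ite_eq']
  simp

lemma norm1_sub_single {v : Zd d} {i : Fin d} (h : 0 < v i) :
    norm1 v = norm1 (v - (Pi.single i 1 : Zd d)) + 1 := by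
  have key : ∀ j, |v j| = |((v - Pi.single i 1 : Zd d)) j| + (if j = i then (1:ℤ) else 0) := by
    intro j
    by_cases hj : j = i
    · subst hj
      simp only [Pi.sub_apply, Pi.single_apply, if_pos rfl, Int.abs_eq_natAbs]
      omega
    · simp [Pi.single_apply, hj]
  unfold norm1
  rw [Finset.sum_congr rfl fun j _ => key j, Finset.sum_add_distrib, Finset.sum_ite_eq']
  simp

lemma step_lemma {x ϱ : Zd d} (h : x ≠ ϱ) :
    ∃ (i : Fin d) (x' : Zd d), (x = x' + Pi.single i 1 ∨ x' = x + Pi.single i 1) ∧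
      norm1 (x - ϱ) = norm1 (x' - ϱ) + 1 := by
  have hex : ∃ i, x i ≠ ϱ i := by
    by_contra h'; push_neg at h'; exact h (funext h')
  obtain ⟨i, hi⟩ := hex
  rcases lt_or_gt_of_ne hi with hlt | hgt
  · refine ⟨i, x + Pi.single i 1, Or.inr rfl, ?_⟩
    have hv : (x - ϱ) i < 0 := by simpa [sub_neg] using hlt
    have := norm1_add_single (i := i) hv
    have hrw : x - ϱ + Pi.single i 1 = x + Pi.single i 1 - ϱ := by abel
    rwa [hrw] at this
  · refine ⟨i, x - Pi.single i 1, Or.inl (by abel), ?_⟩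
    have hv : 0 < (x - ϱ) i := by simpa [sub_pos] using hgt
    have := norm1_sub_single (i := i) hv
    have hrw : x - ϱ - Pi.single i 1 = x - Pi.single i 1 - ϱ := by abel
    rwa [hrw] at this

lemma lip_aux (h : Zd d → ℝ) (k : ℝ)
    (hstep : ∀ (y : Zd d) (j : Fin d), |h (y + Pi.single j 1) - h y| ≤ k) (ϱ : Zd d) :
    ∀ (n : ℕ) (x : Zd d), norm1 (x - ϱ) = n → |h x - h ϱ| ≤ k * n := by
  intro n
  induction n with
  | zero =>
    intro x hx
    have : x = ϱ := by
      have := norm1_eq_zero (by simpa using hx)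
      have := sub_eq_zero.mp this; exact this
    simp [this]
  | succ n ih =>
    intro x hx
    have hne : x ≠ ϱ := by
      rintro rfl; simp [norm1] at hx; omega
    obtain ⟨i, x', hcase, hnorm⟩ := step_lemma hne
    have hx' : norm1 (x' - ϱ) = (n : ℤ) := by omega
    have h1 : |h x - h x'| ≤ k := by
      rcases hcase with hcase | hcase
      · rw [hcase]; exact hstep x' i
      · rw [abs_sub_comm, hcase]; exact hstep x i
    have h2 := ih x' hx'
    calc |h x - h ϱ| ≤ |h x - h x'| + |h x' - h ϱ| := abs_sub_le _ _ _
      _ ≤ k + k * n := add_le_add h1 h2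
      _ = k * (n + 1 : ℕ) := by push_cast; ring

lemma taylor_aux (f : Zd d → ℝ) (k : ℝ) (hk : 0 ≤ k)
    (hb : ∀ (x y z w : Zd d) (i jj : Fin d),
      x - y = Pi.single i 1 → z - w = Pi.single i 1 →
      x - z = Pi.single jj 1 → y - w = Pi.single jj 1 →
        |f x + f w - f y - f z| < k) (ϱ : Zd d) :
    ∀ (n : ℕ) (x : Zd d), norm1 (x - ϱ) = n →
      |f x - f ϱ - ∑ i, ((x i - ϱ i : ℤ) : ℝ) * (f (ϱ + Pi.single i 1) - f ϱ)| ≤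
        k * (n : ℝ) ^ 2 := by
  have hgradlip : ∀ (i : Fin d) (p : Zd d),
      |(f (p + Pi.single i 1) - f p) - (f (ϱ + Pi.single i 1) - f ϱ)| ≤
        k * (norm1 (p - ϱ) : ℤ) := by
    intro i p
    have hstep : ∀ (y : Zd d) (j : Fin d),
        |(fun y => f (y + Pi.single i 1) - f y) (y + Pi.single j 1) -
          (fun y => f (y + Pi.single i 1) - f y) y| ≤ k := by
      intro y j
      have := hb (y + Pi.single j 1 + Pi.single i 1) (y + Pi.single j 1)
        (y + Pi.single i 1) y i j (by abel) (by abel) (by abel) (by abel)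
      have heq : (fun y => f (y + Pi.single i 1) - f y) (y + Pi.single j 1) -
          (fun y => f (y + Pi.single i 1) - f y) y =
          f (y + Pi.single j 1 + Pi.single i 1) + f y - f (y + Pi.single j 1) -
            f (y + Pi.single i 1) := by ring_nf
      rw [heq]
      exact this.le
    have := lip_aux (fun y => f (y + Pi.single i 1) - f y) k hstep ϱ
      (norm1 (p - ϱ)).toNat p (by rw [Int.toNat_of_nonneg (norm1_nonneg _)])
    have hcast : ((norm1 (p - ϱ) : ℤ) : ℝ) = (((norm1 (p - ϱ)).toNat : ℕ) : ℝ) := by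
      have h' := Int.toNat_of_nonneg (norm1_nonneg (p - ϱ))
      exact_mod_cast h'.symm
    rw [hcast]
    exact this
  intro n
  induction n with
  | zero =>
    intro x hx
    have hxe : x = ϱ := sub_eq_zero.mp (norm1_eq_zero (by simpa using hx))
    subst hxe
    simp
  | succ n ih =>
    intro x hx
    have hne : x ≠ ϱ := by rintro rfl; simp [norm1] at hx; omega
    obtain ⟨i₀, x', hcase, hnorm⟩ := step_lemma hne
    have hx' : norm1 (x' - ϱ) = (n : ℤ) := by omega
    have h2 := ih x' hx'
    set D : Fin d → ℝ := fun i => f (ϱ + Pi.single i 1) - f ϱ with hD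
    rcases hcase with hcase | hcase
    · -- x = x' + e_{i₀}
      have hlin : ∑ i, ((x i - ϱ i : ℤ) : ℝ) * D i =
          (∑ i, ((x' i - ϱ i : ℤ) : ℝ) * D i) + D i₀ := by
        have : ∀ i, ((x i - ϱ i : ℤ) : ℝ) * D i =
            ((x' i - ϱ i : ℤ) : ℝ) * D i + (if i = i₀ then D i₀ else 0) := by
          intro i
          by_cases hi : i = i₀
          · subst hi
            have : x i = x' i + 1 := by rw [hcase]; simp
            rw [this]; push_cast; ring_nf; simp
          · have : x i = x' i := by rw [hcase]; simp [Pi.single_apply, hi]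
            rw [this]; simp [hi]
        rw [Finset.sum_congr rfl fun i _ => this i, Finset.sum_add_distrib,
          Finset.sum_ite_eq']
        simp
      have hstepval : f x - f x' = f (x' + Pi.single i₀ 1) - f x' := by rw [hcase]
      have hgl := hgradlip i₀ x'
      rw [hx'] at hgl
      have key : f x - f ϱ - ∑ i, ((x i - ϱ i : ℤ) : ℝ) * D i =
          (f x' - f ϱ - ∑ i, ((x' i - ϱ i : ℤ) : ℝ) * D i) +
            ((f (x' + Pi.single i₀ 1) - f x') - D i₀) := by
        rw [hlin, ← hstepval]; ring
      rw [key]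
      have : |(f (x' + Pi.single i₀ 1) - f x') - D i₀| ≤ k * (n : ℝ) := by
        simpa using hgl
      calc |(f x' - f ϱ - ∑ i, ((x' i - ϱ i : ℤ) : ℝ) * D i) +
            ((f (x' + Pi.single i₀ 1) - f x') - D i₀)| ≤
          k * (n : ℝ) ^ 2 + k * (n : ℝ) := (abs_add_le _ _).trans (add_le_add h2 this)
        _ ≤ k * ((n : ℕ) + 1 : ℝ) ^ 2 := by nlinarith [hk, (Nat.cast_nonneg n : (0:ℝ) ≤ (n:ℝ))]
        _ = k * (((n + 1 : ℕ)) : ℝ) ^ 2 := by push_cast; ring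
    · -- x' = x + e_{i₀}
      have hlin : ∑ i, ((x' i - ϱ i : ℤ) : ℝ) * D i =
          (∑ i, ((x i - ϱ i : ℤ) : ℝ) * D i) + D i₀ := by
        have : ∀ i, ((x' i - ϱ i : ℤ) : ℝ) * D i =
            ((x i - ϱ i : ℤ) : ℝ) * D i + (if i = i₀ then D i₀ else 0) := by
          intro i
          by_cases hi : i = i₀
          · subst hi
            have : x' i = x i + 1 := by rw [hcase]; simp
            rw [this]; push_cast; ring_nf; simp
          · have : x' i = x i := by rw [hcase]; simp [Pi.single_apply, hi]
            rw [this]; simp [hi]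
        rw [Finset.sum_congr rfl fun i _ => this i, Finset.sum_add_distrib,
          Finset.sum_ite_eq']
        simp
      have hgl := hgradlip i₀ x
      rw [hx] at hgl
      have key : f x - f ϱ - ∑ i, ((x i - ϱ i : ℤ) : ℝ) * D i =
          (f x' - f ϱ - ∑ i, ((x' i - ϱ i : ℤ) : ℝ) * D i) -
            ((f (x + Pi.single i₀ 1) - f x) - D i₀) := by
        rw [hlin, ← hcase]; ring
      rw [key]
      have hb2 : |(f (x + Pi.single i₀ 1) - f x) - D i₀| ≤ k * ((n : ℝ) + 1) := by
        simpa using hgl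
      calc |(f x' - f ϱ - ∑ i, ((x' i - ϱ i : ℤ) : ℝ) * D i) -
            ((f (x + Pi.single i₀ 1) - f x) - D i₀)| ≤
          k * (n : ℝ) ^ 2 + k * ((n : ℝ) + 1) := (abs_sub _ _).trans (add_le_add h2 hb2)
        _ ≤ k * ((n : ℝ) + 1) ^ 2 := by nlinarith [hk]
        _ = k * (((n + 1 : ℕ)) : ℝ) ^ 2 := by push_cast; ring


/-- Lemma A.11, a discrete second-order Taylor estimate. -/
theorem discrete_taylor {d : ℕ} (μ : Zd d → ℝ) (f : Zd d → ℝ)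
    (m k J N : ℝ) (hm : 0 < m) (hk : 0 < k) (hJ : 0 < J) (hN : 0 < N) (ϱ : Zd d)
    (hμsum : Summable fun x => |μ x|)
    (ha : ∀ x y : Zd d, norm1 (x - y) = 1 → |f x - f y| < m)
    (hb : ∀ (x y z w : Zd d) (i jj : Fin d),
      x - y = Pi.single i 1 → z - w = Pi.single i 1 →
      x - z = Pi.single jj 1 → y - w = Pi.single jj 1 →
        |f x + f w - f y - f z| < k)
    (hc : ∑' x, μ x = 0)
    (hd' : norm1R (fun i => ∑' x : Zd d, (x i : ℝ) * μ x) ≤ N)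
    (hsum2 : Summable fun x : Zd d => (norm1 (x - ϱ) : ℝ) ^ 2 * |μ x|)
    (he : ∑' x : Zd d, (norm1 (x - ϱ) : ℝ) ^ 2 * |μ x| < J) :
    |∑' x, f x * μ x| ≤ m * N + k * J := by

  classical
  set D : Fin d → ℝ := fun i => f (ϱ + Pi.single i 1) - f ϱ with hDdef
  have hDlt : ∀ i, |D i| ≤ m := by
    intro i
    refine (ha (ϱ + Pi.single i 1) ϱ ?_).le
    rw [add_sub_cancel_left, norm1_single]
  have htay : ∀ x : Zd d,
      |f x - f ϱ - ∑ i, ((x i - ϱ i : ℤ) : ℝ) * D i| ≤ k * ((norm1 (x - ϱ) : ℤ) : ℝ) ^ 2 := by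
    intro x
    have h1 := taylor_aux f k hk.le hb ϱ (norm1 (x - ϱ)).toNat x
      (by rw [Int.toNat_of_nonneg (norm1_nonneg _)])
    have hcast : ((norm1 (x - ϱ) : ℤ) : ℝ) = (((norm1 (x - ϱ)).toNat : ℕ) : ℝ) := by
      exact_mod_cast (Int.toNat_of_nonneg (norm1_nonneg (x - ϱ))).symm
    rw [hcast]
    exact h1
  have hμ : Summable μ := summable_abs_iff.mp hμsum
  have habs_le : ∀ (x : Zd d) (i : Fin d),
      |((x i - ϱ i : ℤ) : ℝ)| ≤ ((norm1 (x - ϱ) : ℤ) : ℝ) := by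
    intro x i
    have h1 : |x i - ϱ i| ≤ norm1 (x - ϱ) := by
      have := Finset.single_le_sum (f := fun j => |(x - ϱ) j|)
        (fun j _ => abs_nonneg _) (Finset.mem_univ i)
      simpa [norm1] using this
    rw [← Int.cast_abs]
    exact_mod_cast h1
  have hnle : ∀ x : Zd d, ((norm1 (x - ϱ) : ℤ) : ℝ) ≤ ((norm1 (x - ϱ) : ℤ) : ℝ) ^ 2 + 1 := by
    intro x
    have h0 : (0 : ℝ) ≤ ((norm1 (x - ϱ) : ℤ) : ℝ) := by exact_mod_cast norm1_nonneg _
    nlinarith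
  have hBi : ∀ i : Fin d, Summable (fun x : Zd d => ((x i - ϱ i : ℤ) : ℝ) * μ x) := by
    intro i
    apply Summable.of_abs
    apply Summable.of_nonneg_of_le (fun x => abs_nonneg _) ?_ (hsum2.add hμsum)
    intro x
    rw [abs_mul]
    calc |((x i - ϱ i : ℤ) : ℝ)| * |μ x| ≤
        (((norm1 (x - ϱ) : ℤ) : ℝ) ^ 2 + 1) * |μ x| :=
          mul_le_mul_of_nonneg_right ((habs_le x i).trans (hnle x)) (abs_nonneg _)
      _ = ((norm1 (x - ϱ) : ℤ) : ℝ) ^ 2 * |μ x| + |μ x| := by ring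
  set A : Zd d → ℝ := fun x => (f x - f ϱ - ∑ i, ((x i - ϱ i : ℤ) : ℝ) * D i) * μ x with hAdef
  have hAabs : ∀ x, |A x| ≤ k * (((norm1 (x - ϱ) : ℤ) : ℝ) ^ 2 * |μ x|) := by
    intro x
    rw [hAdef, abs_mul]
    calc |f x - f ϱ - ∑ i, ((x i - ϱ i : ℤ) : ℝ) * D i| * |μ x| ≤
        (k * ((norm1 (x - ϱ) : ℤ) : ℝ) ^ 2) * |μ x| :=
          mul_le_mul_of_nonneg_right (htay x) (abs_nonneg _)
      _ = k * (((norm1 (x - ϱ) : ℤ) : ℝ) ^ 2 * |μ x|) := by ring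
  have hAsum : Summable A := by
    apply Summable.of_abs
    exact Summable.of_nonneg_of_le (fun x => abs_nonneg _) hAabs (hsum2.mul_left k)
  set G : Zd d → ℝ := fun x =>
    f ϱ * μ x + ∑ i, D i * (((x i - ϱ i : ℤ) : ℝ) * μ x) with hGdef
  have hGsum : Summable G :=
    (hμ.mul_left (f ϱ)).add (summable_sum fun i _ => (hBi i).mul_left (D i))
  have hsum_eq : ∀ x : Zd d, (∑ i, D i * (((x i - ϱ i : ℤ) : ℝ) * μ x)) =
      (∑ i, ((x i - ϱ i : ℤ) : ℝ) * D i) * μ x := by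
    intro x
    rw [Finset.sum_mul]
    exact Finset.sum_congr rfl fun i _ => by ring
  have hsplit : ∀ x, f x * μ x = A x + G x := by
    intro x
    rw [hAdef, hGdef]
    simp only
    rw [hsum_eq]
    ring
  have htsum : ∑' x, f x * μ x = (∑' x, A x) + ∑' x, G x := by
    rw [tsum_congr hsplit]
    exact Summable.tsum_add hAsum hGsum
  -- compute tsum G
  have hGval : ∑' x, G x = ∑ i, D i * ∑' x : Zd d, ((x i - ϱ i : ℤ) : ℝ) * μ x := by
    rw [hGdef]
    rw [Summable.tsum_add (hμ.mul_left (f ϱ)) (summable_sum fun i _ => (hBi i).mul_left (D i))]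
    rw [tsum_mul_left, hc, mul_zero, zero_add]
    rw [Summable.tsum_finsetSum fun i _ => (hBi i).mul_left (D i)]
    exact Finset.sum_congr rfl fun i _ => tsum_mul_left
  have hCi : ∀ i, (∑' x : Zd d, ((x i - ϱ i : ℤ) : ℝ) * μ x) =
      ∑' x : Zd d, ((x i : ℤ) : ℝ) * μ x := by
    intro i
    have h1 : ∀ x : Zd d, ((x i : ℤ) : ℝ) * μ x =
        ((x i - ϱ i : ℤ) : ℝ) * μ x + ((ϱ i : ℤ) : ℝ) * μ x := by
      intro x; push_cast; ring
    have h2 : (∑' x : Zd d, ((x i : ℤ) : ℝ) * μ x) =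
        (∑' x : Zd d, ((x i - ϱ i : ℤ) : ℝ) * μ x) +
          ∑' x : Zd d, ((ϱ i : ℤ) : ℝ) * μ x := by
      rw [tsum_congr h1]
      exact Summable.tsum_add (hBi i) (hμ.mul_left _)
    rw [h2, tsum_mul_left, hc, mul_zero, add_zero]
  -- bound |tsum A|
  have hAbound : |∑' x, A x| ≤ k * J := by
    have h1 : |∑' x, A x| ≤ ∑' x, |A x| := by
      simpa [Real.norm_eq_abs] using
        norm_tsum_le_tsum_norm (f := A) (by simpa [Real.norm_eq_abs] using hAsum.abs)
    have h2 : (∑' x, |A x|) ≤ ∑' x : Zd d, k * (((norm1 (x - ϱ) : ℤ) : ℝ) ^ 2 * |μ x|) :=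
      Summable.tsum_le_tsum hAabs hAsum.abs (hsum2.mul_left k)
    have h3 : (∑' x : Zd d, k * (((norm1 (x - ϱ) : ℤ) : ℝ) ^ 2 * |μ x|)) =
        k * ∑' x : Zd d, ((norm1 (x - ϱ) : ℤ) : ℝ) ^ 2 * |μ x| := tsum_mul_left
    have h4 : k * (∑' x : Zd d, ((norm1 (x - ϱ) : ℤ) : ℝ) ^ 2 * |μ x|) ≤ k * J :=
      mul_le_mul_of_nonneg_left he.le hk.le
    linarith
  -- bound |tsum G|
  have hGbound : |∑' x, G x| ≤ m * N := by
    rw [hGval]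
    calc |∑ i, D i * ∑' x : Zd d, ((x i - ϱ i : ℤ) : ℝ) * μ x| ≤
        ∑ i, |D i * ∑' x : Zd d, ((x i - ϱ i : ℤ) : ℝ) * μ x| :=
          Finset.abs_sum_le_sum_abs _ _
      _ ≤ ∑ i, m * |∑' x : Zd d, ((x i : ℤ) : ℝ) * μ x| := by
          refine Finset.sum_le_sum fun i _ => ?_
          rw [abs_mul, hCi i]
          exact mul_le_mul_of_nonneg_right (hDlt i) (abs_nonneg _)
      _ = m * norm1R (fun i => ∑' x : Zd d, ((x i : ℤ) : ℝ) * μ x) := by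
          rw [norm1R, Finset.mul_sum]
      _ ≤ m * N := mul_le_mul_of_nonneg_left hd' hm.le
  rw [htsum]
  calc |(∑' x, A x) + ∑' x, G x| ≤ |∑' x, A x| + |∑' x, G x| := abs_add_le _ _
    _ ≤ k * J + m * N := add_le_add hAbound hGbound
    _ = m * N + k * J := by ring


end RWRE
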